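/- Let Y act on ℂ[x_1, x_2, x_3, x_4] by Y(P) = x_1 ∂P/∂x_1 + x_2 ∂P/∂x_2 − x_3 ∂P/∂x_3 − x_4 ∂P/∂x_4, and let R := {P ∈ ℂ[x_1, x_2, x_3, x_4] : Y(P) = 0} be the algebra of polynomial first integrals of Y. Then R is not generated as a ℂ-algebra by any three of its elements: there do not exist P_1, P_2, P_3 ∈ R such that the ℂ-subalgebra generated by {P_1, P_2, P_3} equals R. -/

import Mathlib

open MvPolynomial

lemma coeff_pderiv' (i : Fin 4) (m : Fin 4 →₀ ℕ) (P : MvPolynomial (Fin 4) ℂ) :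
    coeff m (pderiv i P) = (m i + 1 : ℂ) * coeff (m + Finsupp.single i 1) P := by
  induction P using MvPolynomial.induction_on' with
  | monomial s a =>
    rw [pderiv_monomial, coeff_monomial, coeff_monomial]
    by_cases h : s = m + Finsupp.single i 1
    · subst h
      have h1 : m + Finsupp.single i 1 - Finsupp.single i 1 = m :=
        add_tsub_cancel_right _ _
      rw [if_pos h1, if_pos rfl, Finsupp.add_apply, Finsupp.single_apply, if_pos rfl]
      push_cast; ring
    · rw [if_neg h]
      by_cases h2 : s - Finsupp.single i 1 = m
      · rw [if_pos h2]
        by_cases h3 : s i = 0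
        · simp [h3]
        · exfalso; apply h
          have hle : Finsupp.single i 1 ≤ s := by
            rw [Finsupp.single_le_iff]; omega
          rw [← h2, tsub_add_cancel_of_le hle]
      · rw [if_neg h2, mul_zero]
  | add p q hp hq => simp [hp, hq]; ring

lemma coeff_X_pderiv (i : Fin 4) (m : Fin 4 →₀ ℕ) (P : MvPolynomial (Fin 4) ℂ) :
    coeff m (X i * pderiv i P) = (m i : ℂ) * coeff m P := by
  rw [coeff_X_mul']
  by_cases h : i ∈ m.support
  · rw [if_pos h, coeff_pderiv']
    have hmi : 1 ≤ m i := by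
      rw [Finsupp.mem_support_iff] at h; omega
    have h1 : ((m - Finsupp.single i 1 : Fin 4 →₀ ℕ)) i = m i - 1 := by
      rw [Finsupp.tsub_apply, Finsupp.single_apply, if_pos rfl]
    have h2 : m - Finsupp.single i 1 + Finsupp.single i 1 = m :=
      tsub_add_cancel_of_le (by rw [Finsupp.single_le_iff]; omega)
    rw [h1, h2]
    congr 1
    have : ((m i - 1 : ℕ) : ℂ) = (m i : ℂ) - 1 := by
      push_cast [hmi]; ring
    rw [this]; ring
  · rw [if_neg h]
    rw [Finsupp.notMem_support_iff] at h
    rw [h]; simp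

lemma first_integral_coeff {Y : MvPolynomial (Fin 4) ℂ → MvPolynomial (Fin 4) ℂ}
    (hY : ∀ P, Y P = X 0 * pderiv 0 P + X 1 * pderiv 1 P
      - X 2 * pderiv 2 P - X 3 * pderiv 3 P)
    {P : MvPolynomial (Fin 4) ℂ} (hP : Y P = 0) (m : Fin 4 →₀ ℕ)
    (hm : m 0 + m 1 ≠ m 2 + m 3) : coeff m P = 0 := by
  have h0 : coeff m (Y P) = 0 := by rw [hP]; simp
  rw [hY] at h0
  simp only [coeff_sub, coeff_add, coeff_X_pderiv] at h0
  have hfac : ((m 0 : ℂ) + m 1 - m 2 - m 3) ≠ 0 := by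
    intro h
    apply hm
    have : ((m 0 + m 1 : ℕ) : ℂ) = ((m 2 + m 3 : ℕ) : ℂ) := by
      push_cast; linear_combination h
    exact_mod_cast this
  have : ((m 0 : ℂ) + m 1 - m 2 - m 3) * coeff m P = 0 := by linear_combination h0
  exact (mul_eq_zero.mp this).resolve_left hfac

lemma deg1_coeff_zero {Y : MvPolynomial (Fin 4) ℂ → MvPolynomial (Fin 4) ℂ}
    (hY : ∀ P, Y P = X 0 * pderiv 0 P + X 1 * pderiv 1 P
      - X 2 * pderiv 2 P - X 3 * pderiv 3 P)
    {P : MvPolynomial (Fin 4) ℂ} (hP : Y P = 0) (k : Fin 4) :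
    coeff (Finsupp.single k 1) P = 0 := by
  apply first_integral_coeff hY hP
  fin_cases k <;> simp [Finsupp.single_apply]

lemma cc_pderiv (k : Fin 4) (T : MvPolynomial (Fin 4) ℂ) :
    coeff 0 (pderiv k T) = coeff (Finsupp.single k 1) T := by
  rw [coeff_pderiv']; simp

lemma coeff_pair (a b : Fin 4) (hab : a ≠ b) (T : MvPolynomial (Fin 4) ℂ) :
    coeff (Finsupp.single a 1 + Finsupp.single b 1) T
      = coeff 0 (pderiv a (pderiv b T)) := by
  rw [cc_pderiv, coeff_pderiv']
  rw [Finsupp.single_apply, if_neg hab]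
  simp

lemma coeff_pair_mul {Y : MvPolynomial (Fin 4) ℂ → MvPolynomial (Fin 4) ℂ}
    (hY : ∀ P, Y P = X 0 * pderiv 0 P + X 1 * pderiv 1 P
      - X 2 * pderiv 2 P - X 3 * pderiv 3 P)
    (a b : Fin 4) (hab : a ≠ b)
    {P Q : MvPolynomial (Fin 4) ℂ} (hP : Y P = 0) (hQ : Y Q = 0) :
    coeff (Finsupp.single a 1 + Finsupp.single b 1) (P * Q)
      = coeff 0 P * coeff (Finsupp.single a 1 + Finsupp.single b 1) Q
        + coeff (Finsupp.single a 1 + Finsupp.single b 1) P * coeff 0 Q := by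
  rw [coeff_pair a b hab]
  rw [pderiv_mul, map_add, pderiv_mul, pderiv_mul]
  have cc_mul : ∀ U V : MvPolynomial (Fin 4) ℂ,
      coeff 0 (U * V) = coeff 0 U * coeff 0 V := by
    intro U V
    rw [← constantCoeff_eq]; exact map_mul _ _ _
  simp only [coeff_add, cc_mul, cc_pderiv]
  rw [deg1_coeff_zero hY hP b, deg1_coeff_zero hY hQ a, deg1_coeff_zero hY hP a,
    coeff_pair a b hab P, coeff_pair a b hab Q, cc_pderiv, cc_pderiv]
  ring

/-- The algebra R of polynomial first integrals of
Y = x₁∂/∂x₁ + x₂∂/∂x₂ − x₃∂/∂x₃ − x₄∂/∂x₄ on ℂ[x₁,x₂,x₃,x₄] cannot be generated,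
as a ℂ-algebra, by three of its elements. -/
theorem first_integrals_not_three_generated
    (Y : MvPolynomial (Fin 4) ℂ → MvPolynomial (Fin 4) ℂ)
    (hY : ∀ P, Y P = X 0 * pderiv 0 P + X 1 * pderiv 1 P
      - X 2 * pderiv 2 P - X 3 * pderiv 3 P) :
    ¬ ∃ P₁ P₂ P₃ : MvPolynomial (Fin 4) ℂ,
        Y P₁ = 0 ∧ Y P₂ = 0 ∧ Y P₃ = 0 ∧
        ∀ P : MvPolynomial (Fin 4) ℂ,
          (P ∈ Algebra.adjoin ℂ ({P₁, P₂, P₃} : Set (MvPolynomial (Fin 4) ℂ)) ↔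
            Y P = 0) := by
  classical
  rintro ⟨P₁, P₂, P₃, h1, h2, h3, hgen⟩
  set av : Fin 4 → Fin 4 := ![0, 0, 1, 1] with hav
  set bv : Fin 4 → Fin 4 := ![2, 3, 2, 3] with hbv
  have habv : ∀ i, av i ≠ bv i := by decide
  set ψ : MvPolynomial (Fin 4) ℂ → (Fin 4 → ℂ) :=
    fun P i => coeff (Finsupp.single (av i) 1 + Finsupp.single (bv i) 1) P with hψ
  set S : Finset (Fin 4 → ℂ) := {ψ P₁, ψ P₂, ψ P₃} with hS
  set W : Submodule ℂ (Fin 4 → ℂ) := Submodule.span ℂ (S : Set (Fin 4 → ℂ)) with hW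
  have key : ∀ P, P ∈ Algebra.adjoin ℂ ({P₁, P₂, P₃} : Set (MvPolynomial (Fin 4) ℂ)) →
      ψ P ∈ W := by
    intro P hP
    induction hP using Algebra.adjoin_induction with
    | mem x hx =>
      apply Submodule.subset_span
      rcases hx with rfl | rfl | rfl <;> simp [hS]
    | algebraMap r =>
      have hne : ∀ i : Fin 4,
          (0 : Fin 4 →₀ ℕ) ≠ Finsupp.single (av i) 1 + Finsupp.single (bv i) 1 := by
        intro i h
        have := congrFun (congrArg (DFunLike.coe) h) (av i)
        simp [Finsupp.single_apply, Ne.symm (habv i)] at this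
      have : ψ ((algebraMap ℂ (MvPolynomial (Fin 4) ℂ)) r) = 0 := by
        funext i
        simp only [hψ, algebraMap_eq, coeff_C, Pi.zero_apply]
        rw [if_neg (hne i)]
      rw [this]; exact zero_mem W
    | add x y hx hy ihx ihy =>
      have : ψ (x + y) = ψ x + ψ y := by funext i; simp [hψ, coeff_add]
      rw [this]; exact add_mem ihx ihy
    | mul x y hx hy ihx ihy =>
      have hx' : Y x = 0 := (hgen x).mp hx
      have hy' : Y y = 0 := (hgen y).mp hy
      have : ψ (x * y) = coeff 0 x • ψ y + coeff 0 y • ψ x := by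
        funext i
        simp only [hψ, Pi.add_apply, Pi.smul_apply, smul_eq_mul]
        rw [coeff_pair_mul hY (av i) (bv i) (habv i) hx' hy']
        ring
      rw [this]
      exact add_mem (Submodule.smul_mem _ _ ihy) (Submodule.smul_mem _ _ ihx)
  -- the four quadratic monomials are first integrals
  have hg : ∀ i : Fin 4, ψ (X (av i) * X (bv i)) ∈ W := by
    intro i
    apply key
    rw [hgen, hY]
    fin_cases i <;> simp [hav, hbv, pderiv_mul] <;> ring
  have hbasis : ∀ j : Fin 4, (Pi.basisFun ℂ (Fin 4)) j ∈ W := by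
    intro j
    have : (Pi.basisFun ℂ (Fin 4)) j = ψ (X (av j) * X (bv j)) := by
      funext k
      rw [hψ]
      simp only []
      rw [coeff_pair _ _ (habv k)]
      fin_cases j <;> fin_cases k <;>
        simp [hav, hbv, pderiv_mul, Pi.basisFun_apply, Pi.single_apply, ← constantCoeff_eq]
    rw [this]; exact hg j
  have htop : W = ⊤ := by
    apply top_unique
    rw [← (Pi.basisFun ℂ (Fin 4)).span_eq]
    apply Submodule.span_le.mpr
    rintro v ⟨j, rfl⟩
    exact hbasis j
  have h4 : Module.finrank ℂ (Fin 4 → ℂ) ≤ S.card := by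
    calc Module.finrank ℂ (Fin 4 → ℂ)
        = Module.finrank ℂ W := by rw [htop]; exact (finrank_top ℂ _).symm
      _ ≤ S.card := finrank_span_finset_le_card S
  have hcard : S.card ≤ 3 := by
    calc S.card ≤ ({ψ P₂, ψ P₃} : Finset (Fin 4 → ℂ)).card + 1 := Finset.card_insert_le _ _
      _ ≤ (({ψ P₃} : Finset (Fin 4 → ℂ)).card + 1) + 1 := by
          exact Nat.add_le_add_right (Finset.card_insert_le _ _) 1
      _ ≤ 3 := by simp
  rw [Module.finrank_pi] at h4
  simp at h4
  omega
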